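/- (Spherical analogue of the triangle DNA inequality.) Let a, b, c be the side lengths of a nondegenerate spherical triangle with a + b + c < 2π, with spherical angles α, β, γ opposite a, b, c respectively, and let ℰ = α + β + γ − π be its spherical excess. Then (a + c) · (2π − ℰ) < (a + b + c) · (2π − β). -/

import Mathlib

open Real Set

lemma concave_aux {l k : ℝ} (hl0 : 0 ≤ l) (hl1 : l ≤ 1) (hlk : l ≤ k) :
    ConcaveOn ℝ (Icc 0 (π/2)) (fun s => Real.sin s * k - Real.sin (l * s)) := by
  have hd1 : ∀ s : ℝ, HasDerivAt (fun s => Real.sin s * k - Real.sin (l * s))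
      (Real.cos s * k - Real.cos (l * s) * l) s := by
    intro s
    have h2 : HasDerivAt (fun s : ℝ => Real.sin (l * s)) (Real.cos (l * s) * l) s := by
      simpa [Function.comp_def] using (Real.hasDerivAt_sin (l * s)).comp s ((hasDerivAt_id s).const_mul l)
    exact ((Real.hasDerivAt_sin s).mul_const k).sub h2
  have hderiv : deriv (fun s => Real.sin s * k - Real.sin (l * s)) =
      fun s => Real.cos s * k - Real.cos (l * s) * l := funext fun s => (hd1 s).deriv
  have hd2 : ∀ s : ℝ, HasDerivAt (fun s => Real.cos s * k - Real.cos (l * s) * l)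
      (-Real.sin s * k - -Real.sin (l * s) * l * l) s := by
    intro s
    have h2 : HasDerivAt (fun s : ℝ => Real.cos (l * s)) (-Real.sin (l * s) * l) s := by
      simpa [Function.comp_def] using (Real.hasDerivAt_cos (l * s)).comp s ((hasDerivAt_id s).const_mul l)
    exact ((Real.hasDerivAt_cos s).mul_const k).sub (h2.mul_const l)
  apply concaveOn_of_deriv2_nonpos' (convex_Icc _ _)
  · exact fun s _ => (hd1 s).differentiableAt.differentiableWithinAt
  · rw [hderiv]
    exact fun s _ => (hd2 s).differentiableAt.differentiableWithinAt
  · intro x hx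
    have hxx : deriv^[2] (fun s => Real.sin s * k - Real.sin (l * s)) x
        = -Real.sin x * k - -Real.sin (l * x) * l * l := by
      show deriv (deriv _) x = _
      rw [hderiv]
      exact (hd2 x).deriv
    rw [hxx]
    have hx0 : (0:ℝ) ≤ x := hx.1
    have hx2 : x ≤ π/2 := hx.2
    have hsle : Real.sin (l * x) ≤ Real.sin x :=
      Real.sin_le_sin_of_le_of_le_pi_div_two (by nlinarith [pi_pos]) hx2 (by nlinarith)
    have hs0 : 0 ≤ Real.sin (l * x) :=
      Real.sin_nonneg_of_nonneg_of_le_pi (by positivity) (by nlinarith [pi_pos])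
    have hsx0 : 0 ≤ Real.sin x :=
      Real.sin_nonneg_of_nonneg_of_le_pi hx0 (by nlinarith [pi_pos])
    nlinarith [mul_le_mul_of_nonneg_left hsle (mul_nonneg hl0 hl0),
      mul_le_mul_of_nonneg_right hl1 (mul_nonneg hl0 hsx0),
      mul_le_mul_of_nonneg_right hlk hsx0]

lemma sin_mul_sin_key {x y : ℝ} (hx0 : 0 ≤ x) (hx : x ≤ π/2) (hy0 : 0 ≤ y) (hy : y ≤ π/2) :
    Real.sin (2/π * y * x) ≤ Real.sin x * Real.sin y := by
  have hπ := pi_pos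
  set l := 2/π * y with hl
  have hl0 : 0 ≤ l := by positivity
  have hl1 : l ≤ 1 := by rw [hl]; rw [div_mul_eq_mul_div, div_le_one hπ]; linarith
  have hlk : l ≤ Real.sin y := Real.mul_le_sin hy0 hy
  have hconc := concave_aux hl0 hl1 hlk
  have h0 : (0:ℝ) ∈ Icc (0:ℝ) (π/2) := ⟨le_refl _, by positivity⟩
  have hpi2 : (π/2) ∈ Icc (0:ℝ) (π/2) := ⟨by positivity, le_refl _⟩
  set t := x / (π/2) with ht
  have ht0 : 0 ≤ t := by positivity
  have ht1 : 1 - t ≥ 0 := by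
    have : t ≤ 1 := by rw [ht, div_le_one (by positivity)]; exact hx
    linarith
  have hsum : (1 - t) + t = 1 := by ring
  have hcc := hconc.2 h0 hpi2 ht1 ht0 hsum
  have hpt : (1 - t) • (0:ℝ) + t • (π/2) = x := by
    simp only [smul_eq_mul, mul_zero, zero_add, ht]
    field_simp
  rw [hpt] at hcc
  have hg0 : Real.sin (0:ℝ) * Real.sin y - Real.sin (l * 0) = 0 := by simp
  have hgpi : Real.sin (π/2) * Real.sin y - Real.sin (l * (π/2)) = 0 := by
    have hly : l * (π/2) = y := by rw [hl]; field_simp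
    rw [hly, Real.sin_pi_div_two]; ring
  simp only [smul_eq_mul] at hcc
  rw [hg0, hgpi] at hcc
  simp only [mul_zero, add_zero] at hcc
  have hlx : 2/π * y * x = l * x := by rw [hl]
  rw [hlx]
  linarith [hcc]

lemma cos_bound {p q r : ℝ} (hp : 0 < p) (hq : 0 < q) (hr : 0 < r)
    (h1 : p < q + r) (h2 : q < r + p) (h3 : r < p + q) (hsum : p + q + r < 2*π) :
    Real.cos q * Real.cos r - Real.sin q * Real.sin r < Real.cos p ∧
    Real.cos p < Real.cos q * Real.cos r + Real.sin q * Real.sin r := by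
  have hπ := pi_pos
  have hpπ : p < π := by linarith
  constructor
  · rw [← Real.cos_add]
    rcases le_or_gt (q + r) π with h | h
    · exact Real.cos_lt_cos_of_nonneg_of_le_pi hp.le h h1
    · have : Real.cos (q + r) = Real.cos (2*π - (q+r)) := (Real.cos_two_pi_sub _).symm
      rw [this]
      exact Real.cos_lt_cos_of_nonneg_of_le_pi hp.le (by linarith) (by linarith)
  · rw [← Real.cos_sub]
    have habs : |q - r| < p := abs_sub_lt_iff.mpr ⟨by linarith, by linarith⟩
    calc Real.cos p < Real.cos |q - r| :=
        Real.cos_lt_cos_of_nonneg_of_le_pi (abs_nonneg _) (by linarith) habs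
      _ = Real.cos (q - r) := Real.cos_abs _


/-- The spherical angle opposite the side of length `a` in a spherical triangle with side
lengths `a`, `b`, `c`, given by the spherical law of cosines. -/
noncomputable def sphAngle (a b c : ℝ) : ℝ :=
  Real.arccos ((Real.cos a - Real.cos b * Real.cos c) / (Real.sin b * Real.sin c))

set_option maxHeartbeats 1000000 in
/-- **Lemma 2s** of Nazarov–Petrov (spherical triangle DNA inequality): for a nondegenerate
spherical triangle with side lengths `a`, `b`, `c` (with `a + b + c < 2π`), angle `β` opposite
`b` and spherical excess `ℰ = α + β + γ − π`, one has
`(a + c)(2π − ℰ) < (a + b + c)(2π − β)`. -/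
theorem spherical_triangle_dna (a b c : ℝ)
    (ha : 0 < a) (hb : 0 < b) (hc : 0 < c)
    (habc : a < b + c) (hbca : b < c + a) (hcab : c < a + b)
    (hsum : a + b + c < 2 * π) :
    (a + c) * (2 * π - (sphAngle a b c + sphAngle b c a + sphAngle c a b - π)) <
      (a + b + c) * (2 * π - sphAngle b c a) := by
  have hπ := Real.pi_pos
  have haπ : a < π := by linarith
  have hbπ : b < π := by linarith
  have hcπ : c < π := by linarith
  have hsa : 0 < Real.sin a := Real.sin_pos_of_pos_of_lt_pi ha haπ
  have hsb : 0 < Real.sin b := Real.sin_pos_of_pos_of_lt_pi hb hbπ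
  have hsc : 0 < Real.sin c := Real.sin_pos_of_pos_of_lt_pi hc hcπ
  obtain ⟨x, hxdef⟩ : ∃ t : ℝ,
      (Real.cos a - Real.cos b * Real.cos c) / (Real.sin b * Real.sin c) = t := ⟨_, rfl⟩
  obtain ⟨y, hydef⟩ : ∃ t : ℝ,
      (Real.cos b - Real.cos c * Real.cos a) / (Real.sin c * Real.sin a) = t := ⟨_, rfl⟩
  obtain ⟨z, hzdef⟩ : ∃ t : ℝ,
      (Real.cos c - Real.cos a * Real.cos b) / (Real.sin a * Real.sin b) = t := ⟨_, rfl⟩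
  obtain ⟨hA1, hA2⟩ := cos_bound ha hb hc habc hbca hcab hsum
  obtain ⟨hB1, hB2⟩ := cos_bound hb hc ha hbca hcab habc (by linarith)
  obtain ⟨hC1, hC2⟩ := cos_bound hc ha hb hcab habc hbca (by linarith)
  have hx1 : x < 1 := by
    rw [← hxdef]; exact (div_lt_one (by positivity)).mpr (by linarith)
  have hx1' : -1 < x := by
    rw [← hxdef]; exact (lt_div_iff₀ (by positivity)).mpr (by linarith)
  have hy1 : y < 1 := by
    rw [← hydef]; exact (div_lt_one (by positivity)).mpr (by linarith)
  have hy1' : -1 < y := by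
    rw [← hydef]; exact (lt_div_iff₀ (by positivity)).mpr (by linarith)
  have hz1 : z < 1 := by
    rw [← hzdef]; exact (div_lt_one (by positivity)).mpr (by linarith)
  have hz1' : -1 < z := by
    rw [← hzdef]; exact (lt_div_iff₀ (by positivity)).mpr (by linarith)
  have hαx : sphAngle a b c = Real.arccos x := by rw [sphAngle, hxdef]
  have hβy : sphAngle b c a = Real.arccos y := by rw [sphAngle, hydef]
  have hγz : sphAngle c a b = Real.arccos z := by rw [sphAngle, hzdef]
  set α := sphAngle a b c with hαdef
  set β := sphAngle b c a with hβdef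
  set γ := sphAngle c a b with hγdef
  have hα0 : 0 < α := by rw [hαx]; exact Real.arccos_pos.mpr hx1
  have hβ0 : 0 < β := by rw [hβy]; exact Real.arccos_pos.mpr hy1
  have hγ0 : 0 < γ := by rw [hγz]; exact Real.arccos_pos.mpr hz1
  have hαπ : α < π := by
    rw [hαx]
    exact lt_of_le_of_ne (Real.arccos_le_pi _)
      (fun h => absurd (Real.arccos_eq_pi.mp h) (by linarith))
  have hβπ : β < π := by
    rw [hβy]
    exact lt_of_le_of_ne (Real.arccos_le_pi _)
      (fun h => absurd (Real.arccos_eq_pi.mp h) (by linarith))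
  have hγπ : γ < π := by
    rw [hγz]
    exact lt_of_le_of_ne (Real.arccos_le_pi _)
      (fun h => absurd (Real.arccos_eq_pi.mp h) (by linarith))
  have hcosα : Real.cos α = x := by rw [hαx]; exact Real.cos_arccos hx1'.le hx1.le
  have hcosβ : Real.cos β = y := by rw [hβy]; exact Real.cos_arccos hy1'.le hy1.le
  have hcosγ : Real.cos γ = z := by rw [hγz]; exact Real.cos_arccos hz1'.le hz1.le
  have hsinβ : Real.sin β = Real.sqrt (1 - y^2) := by rw [hβy]; exact Real.sin_arccos y
  have hsinγ : Real.sin γ = Real.sqrt (1 - z^2) := by rw [hγz]; exact Real.sin_arccos z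
  have hxsbsc : x * (Real.sin b * Real.sin c) = Real.cos a - Real.cos b * Real.cos c := by
    rw [← hxdef]; field_simp
  have hyscsa : y * (Real.sin c * Real.sin a) = Real.cos b - Real.cos c * Real.cos a := by
    rw [← hydef]; field_simp
  have hzsasb : z * (Real.sin a * Real.sin b) = Real.cos c - Real.cos a * Real.cos b := by
    rw [← hzdef]; field_simp
  have ea : Real.sin a ^ 2 = 1 - Real.cos a ^ 2 := Real.sin_sq a
  have eb : Real.sin b ^ 2 = 1 - Real.cos b ^ 2 := Real.sin_sq b
  have ec : Real.sin c ^ 2 = 1 - Real.cos c ^ 2 := Real.sin_sq c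
  have h1y2 : 0 < 1 - y^2 := by
    have h := mul_pos (show 0 < 1 - y by linarith) (show 0 < 1 + y by linarith)
    linarith [h]
  have h1z2 : 0 < 1 - z^2 := by
    have h := mul_pos (show 0 < 1 - z by linarith) (show 0 < 1 + z by linarith)
    linarith [h]
  obtain ⟨D, hDdef⟩ : ∃ t : ℝ, 1 - Real.cos a^2 - Real.cos b^2 - Real.cos c^2
      + 2*(Real.cos a*Real.cos b*Real.cos c) = t := ⟨_, rfl⟩
  have hDy : (1 - y^2) * (Real.sin c * Real.sin a)^2 = D := by
    have h : (1 - y^2) * (Real.sin c * Real.sin a)^2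
        = (Real.sin c * Real.sin a)^2 - (y * (Real.sin c * Real.sin a))^2 := by ring
    rw [h, hyscsa, ← hDdef]
    linear_combination (Real.sin a^2) * ec + (1 - Real.cos c^2) * ea
  have hDz : (1 - z^2) * (Real.sin a * Real.sin b)^2 = D := by
    have h : (1 - z^2) * (Real.sin a * Real.sin b)^2
        = (Real.sin a * Real.sin b)^2 - (z * (Real.sin a * Real.sin b))^2 := by ring
    rw [h, hzsasb, ← hDdef]
    linear_combination (Real.sin b^2) * ea + (1 - Real.cos a^2) * eb
  have hDpos : 0 < D := by
    rw [← hDy]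
    positivity
  have hsinβsa : Real.sin β * (Real.sin c * Real.sin a) = Real.sqrt D := by
    rw [hsinβ,
      show Real.sin c * Real.sin a = Real.sqrt ((Real.sin c * Real.sin a)^2) from
        (Real.sqrt_sq (by positivity)).symm,
      ← Real.sqrt_mul h1y2.le, hDy]
  have hsinγsab : Real.sin γ * (Real.sin a * Real.sin b) = Real.sqrt D := by
    rw [hsinγ,
      show Real.sin a * Real.sin b = Real.sqrt ((Real.sin a * Real.sin b)^2) from
        (Real.sqrt_sq (by positivity)).symm,
      ← Real.sqrt_mul h1z2.le, hDz]
  have hsinprod : Real.sin β * Real.sin γ * (Real.sin a^2 * Real.sin b * Real.sin c) = D := by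
    calc Real.sin β * Real.sin γ * (Real.sin a^2 * Real.sin b * Real.sin c)
        = (Real.sin β * (Real.sin c * Real.sin a)) * (Real.sin γ * (Real.sin a * Real.sin b)) := by
          ring
      _ = Real.sqrt D * Real.sqrt D := by rw [hsinβsa, hsinγsab]
      _ = D := Real.mul_self_sqrt hDpos.le
  have hkey : (x + y*z) * (Real.sin a^2 * Real.sin b * Real.sin c) = Real.cos a * D := by
    have h : (x + y*z) * (Real.sin a^2 * Real.sin b * Real.sin c)
        = (x*(Real.sin b*Real.sin c))*Real.sin a^2
          + (y*(Real.sin c*Real.sin a))*(z*(Real.sin a*Real.sin b)) := by ring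
    rw [h, hxsbsc, hyscsa, hzsasb, ← hDdef]
    linear_combination (Real.cos a - Real.cos b * Real.cos c) * ea
  have hca1 : Real.cos a < 1 := by
    have h := Real.cos_lt_cos_of_nonneg_of_le_pi (le_refl 0) haπ.le ha
    rwa [Real.cos_zero] at h
  have hS : 0 < Real.sin a^2 * Real.sin b * Real.sin c := by positivity
  have hxyz : x + y*z < Real.sin β * Real.sin γ := by
    have h1 : (x + y*z) * (Real.sin a^2 * Real.sin b * Real.sin c)
        < Real.sin β * Real.sin γ * (Real.sin a^2 * Real.sin b * Real.sin c) := by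
      rw [hkey, hsinprod]
      have h2 := mul_lt_mul_of_pos_right hca1 hDpos
      linarith [h2]
    exact lt_of_mul_lt_mul_right h1 hS.le
  have hexc : π < α + β + γ := by
    rcases le_or_gt π (β + γ) with h | h
    · linarith
    · by_contra hcon
      push_neg at hcon
      have hle : Real.cos (π - (β+γ)) ≤ Real.cos α :=
        Real.cos_le_cos_of_nonneg_of_le_pi hα0.le (by linarith) (by linarith)
      have hcosw : Real.cos (π - (β+γ)) = Real.sin β * Real.sin γ - y * z := by
        rw [Real.cos_pi_sub, Real.cos_add, hcosβ, hcosγ]; ring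
      rw [hcosα, hcosw] at hle
      linarith
  rcases le_or_gt π (α + γ) with hcase | hcase
  · have key1 : (a+c)*(π - α - γ) ≤ 0 :=
      mul_nonpos_of_nonneg_of_nonpos (by linarith) (by linarith)
    have key2 : 0 < b*(2*π - β) := mul_pos hb (by linarith)
    linarith [key1, key2]
  · have hac : a + c < π := by
      by_contra hcon
      push_neg at hcon
      have hsinac : Real.sin (a+c) ≤ 0 := by
        have h1 := Real.sin_sub_pi (a+c)
        have h2 : 0 ≤ Real.sin (a+c-π) :=
          Real.sin_nonneg_of_nonneg_of_le_pi (by linarith) (by linarith)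
        linarith
      have hcab' : Real.cos b < Real.cos (a - c) := by
        have habs : |a - c| < b := abs_sub_lt_iff.mpr ⟨by linarith, by linarith⟩
        calc Real.cos b < Real.cos |a-c| :=
            Real.cos_lt_cos_of_nonneg_of_le_pi (abs_nonneg _) hbπ.le habs
          _ = Real.cos (a - c) := Real.cos_abs _
      have hid : (x + z) * (Real.sin a * Real.sin b * Real.sin c) =
          Real.sin (a+c) * (Real.cos (a-c) - Real.cos b) := by
        have h : (x + z) * (Real.sin a * Real.sin b * Real.sin c)
            = (x*(Real.sin b*Real.sin c))*Real.sin a + (z*(Real.sin a*Real.sin b))*Real.sin c := by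
          ring
        rw [h, hxsbsc, hzsasb, Real.sin_add, Real.cos_sub]
        linear_combination (-(Real.sin c * Real.cos c)) * ea + (-(Real.cos a * Real.sin a)) * ec
      have hS' : 0 < Real.sin a * Real.sin b * Real.sin c := by positivity
      have hmul : (x + z) * (Real.sin a * Real.sin b * Real.sin c)
          ≤ 0 * (Real.sin a * Real.sin b * Real.sin c) := by
        rw [hid, zero_mul]
        exact mul_nonpos_of_nonpos_of_nonneg hsinac (by linarith)
      have hxz : x + z ≤ 0 := le_of_mul_le_mul_right hmul hS'
      have hzx : z ≤ -x := by linarith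
      have hmono : Real.arccos (-x) ≤ Real.arccos z := by
        rw [Real.arccos_eq_pi_div_two_sub_arcsin, Real.arccos_eq_pi_div_two_sub_arcsin]
        have h := Real.monotone_arcsin hzx
        linarith
      rw [Real.arccos_neg] at hmono
      rw [← hαx, ← hγz] at hmono
      linarith
    have hcosb_eq : Real.cos b
        = Real.cos c * Real.cos a + Real.sin c * Real.sin a * y := by
      linear_combination -hyscsa
    have hsinb2 : Real.sin (b/2)^2 = (1 - Real.cos b)/2 := by
      have h := Real.sin_sq_eq_half_sub (b/2)
      rw [show 2*(b/2) = b by ring] at h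
      linarith
    have hsins2 : Real.sin ((a+c)/2)^2 = (1 - Real.cos (a+c))/2 := by
      have h := Real.sin_sq_eq_half_sub ((a+c)/2)
      rw [show 2*((a+c)/2) = a+c by ring] at h
      linarith
    have hsinθ2 : Real.sin (β/2)^2 = (1 - y)/2 := by
      have h := Real.sin_sq_eq_half_sub (β/2)
      rw [show 2*(β/2) = β by ring, hcosβ] at h
      linarith
    have hcosac : Real.cos a * Real.cos c + Real.sin a * Real.sin c ≤ 1 := by
      rw [← Real.cos_sub]; exact Real.cos_le_one _
    have hsq : (Real.sin ((a+c)/2) * Real.sin (β/2))^2 ≤ Real.sin (b/2)^2 := by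
      have h : (Real.sin ((a+c)/2) * Real.sin (β/2))^2
          = Real.sin ((a+c)/2)^2 * Real.sin (β/2)^2 := by ring
      rw [h, hsins2, hsinθ2, hsinb2, hcosb_eq, Real.cos_add]
      have hint := mul_nonneg (show (0:ℝ) ≤ 1 + y by linarith)
        (show (0:ℝ) ≤ 1 - (Real.cos a * Real.cos c + Real.sin a * Real.sin c) by linarith)
      linarith [hint]
    have hss0 : 0 ≤ Real.sin ((a+c)/2) :=
      Real.sin_nonneg_of_nonneg_of_le_pi (by linarith) (by linarith)
    have hsθ0 : 0 ≤ Real.sin (β/2) :=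
      Real.sin_nonneg_of_nonneg_of_le_pi (by linarith) (by linarith)
    have hsb20 : 0 ≤ Real.sin (b/2) :=
      Real.sin_nonneg_of_nonneg_of_le_pi (by linarith) (by linarith)
    have hsinb_ge : Real.sin ((a+c)/2) * Real.sin (β/2) ≤ Real.sin (b/2) := by
      have h := Real.sqrt_le_sqrt hsq
      rwa [Real.sqrt_sq (by positivity), Real.sqrt_sq hsb20] at h
    have harcsin_le : Real.arcsin (Real.sin ((a+c)/2) * Real.sin (β/2)) ≤ b/2 := by
      have h := Real.monotone_arcsin hsinb_ge
      rwa [Real.arcsin_sin (by linarith) (by linarith)] at h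
    have hkey_low : 2/π * (β/2) * ((a+c)/2)
        ≤ Real.arcsin (Real.sin ((a+c)/2) * Real.sin (β/2)) := by
      have h1 := sin_mul_sin_key (x := (a+c)/2) (y := β/2)
        (by linarith) (by linarith) (by linarith) (by linarith)
      have h2 := Real.monotone_arcsin h1
      have hb3 : β*(a+c) ≤ π*π :=
        mul_le_mul hβπ.le hac.le (by linarith) hπ.le
      have hnn : 0 ≤ 2/π * (β/2) * ((a+c)/2) := by positivity
      rwa [Real.arcsin_sin (by linarith [hnn])
        (by rw [div_mul_eq_mul_div, div_mul_eq_mul_div, div_le_iff₀ hπ]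
            linarith [hb3])] at h2
    have hb_low : 2/π * (β/2) * ((a+c)/2) ≤ b/2 := le_trans hkey_low harcsin_le
    have hbge : β*(a+c) ≤ π*b := by
      have h : 2/π * (β/2) * ((a+c)/2) = β*(a+c)/(2*π) := by field_simp
      rw [h, div_le_div_iff₀ (by positivity) (by norm_num : (0:ℝ) < 2)] at hb_low
      linarith
    have step1 : (a+c)*(π - α - γ) < (a+c)*β :=
      mul_lt_mul_of_pos_left (by linarith) (by linarith)
    have hbβ : b*β ≤ b*π := mul_le_mul_of_nonneg_left hβπ.le hb.le
    have step2 : (a+c)*β ≤ b*(2*π - β) := by linarith [hbge, hbβ]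
    have key1 : (a+c)*(π - α - γ) < b*(2*π - β) := lt_of_lt_of_le step1 step2
    linarith [key1]
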